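/- Let 0 < q < 1, 0 < ϱ < 1−q, and r_q = 2ζ_q^−/(1 + ϱ + q·ζ_q^−) with ζ_q^− = ((√(ϱ+q) − √(ϱ(1−q)))/q)². Then r_q < 1/(ϱ+q). -/

import Mathlib

/-- r_q = 2ζ_q^−/(1 + ϱ + q ζ_q^−) < 1/(ϱ+q). -/
theorem stmt_14 (q ϱ : ℝ) (hq0 : 0 < q) (hq1 : q < 1) (hϱ : 0 < ϱ)
    (hstab : ϱ < 1 - q) :
    let ζ := ((Real.sqrt (ϱ + q) - Real.sqrt (ϱ * (1 - q))) / q) ^ 2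
    2 * ζ / (1 + ϱ + q * ζ) < 1 / (ϱ + q) := by
  intro ζ
  have hpq : (0:ℝ) < ϱ + q := by linarith
  set s := Real.sqrt (ϱ + q) with hs
  set t := Real.sqrt (ϱ * (1 - q)) with ht
  have hs0 : 0 ≤ s := Real.sqrt_nonneg _
  have ht0 : 0 ≤ t := Real.sqrt_nonneg _
  have hs2 : s ^ 2 = ϱ + q := Real.sq_sqrt hpq.le
  have ht2 : t ^ 2 = ϱ * (1 - q) := Real.sq_sqrt (by nlinarith)
  have hst : ϱ * (ϱ + q) < s * t := by
    have hsq : (ϱ * (ϱ + q)) ^ 2 < (s * t) ^ 2 := by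
      have : (s * t) ^ 2 = (ϱ + q) * (ϱ * (1 - q)) := by ring_nf; nlinarith [hs2, ht2]
      rw [this]
      have h1 : ϱ * (ϱ + q) < 1 - q := by nlinarith
      nlinarith [mul_pos hϱ hpq, h1]
    exact lt_of_pow_lt_pow_left₀ 2 (mul_nonneg hs0 ht0) hsq
  have hζ : ζ = (s - t) ^ 2 / q ^ 2 := by
    simp [ζ, div_pow]
    rfl
  have hζ0 : 0 ≤ ζ := by rw [hζ]; positivity
  have hkey : ζ * (2 * ϱ + q) < 1 + ϱ := by
    have hprod : (s - t) ^ 2 * (s + t) ^ 2 = q ^ 2 * (1 + ϱ) ^ 2 := by nlinarith [hs2, ht2]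
    have hsum : (1 + ϱ) * (2 * ϱ + q) < (s + t) ^ 2 := by nlinarith [hst, hs2, ht2]
    rw [hζ, div_mul_eq_mul_div, div_lt_iff₀ (by positivity)]
    have h1p : (0:ℝ) < 1 + ϱ := by linarith
    rcases eq_or_lt_of_le (sq_nonneg (s - t)) with h | h
    · rw [← h]; nlinarith
    · have h2 : (s - t) ^ 2 * ((1 + ϱ) * (2 * ϱ + q)) < (s - t) ^ 2 * (s + t) ^ 2 :=
        mul_lt_mul_of_pos_left hsum h
      rw [hprod] at h2
      nlinarith [h2, h1p]
  have hD : 0 < 1 + ϱ + q * ζ := by nlinarith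
  rw [div_lt_div_iff₀ hD hpq]
  nlinarith [hkey]
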